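/- arXiv:1205.1255 — 2 statements merged into one kernel-verified Lean document; each statement's English description precedes it below -/
import Mathlib

section
/- Let α > 3 be real, let σ₁ satisfy α = (18σ₁ − 5σ₁²)/(3(3σ₁² + 14σ₁ − 18)) with σ₂ < σ₁ < 9/8, set q₁ = 6ασ₁/(3α + σ₁) and β = 2σ₁/(9 − 8σ₁). Then 3/(2α) + 2/β = f(α), where f(α) = (√(103α² − 12α + 9) − 9α)/(2α). -/
theorem stmt_11 (α σ₁ q₁ β : ℝ) (hα : 3 < α)
    (hrel : α = (18 * σ₁ - 5 * σ₁ ^ 2) / (3 * (3 * σ₁ ^ 2 + 14 * σ₁ - 18)))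
    (hσ₁lo : (Real.sqrt 103 - 7) / 3 < σ₁) (hσ₁hi : σ₁ < 9 / 8)
    (hq₁ : q₁ = 6 * α * σ₁ / (3 * α + σ₁))
    (hβ : β = 2 * σ₁ / (9 - 8 * σ₁)) :
    3 / (2 * α) + 2 / β = (Real.sqrt (103 * α ^ 2 - 12 * α + 9) - 9 * α) / (2 * α) := by
  have hs103 : Real.sqrt 103 ^ 2 = 103 := Real.sq_sqrt (by norm_num)
  have h103 : (7 : ℝ) < Real.sqrt 103 := by
    nlinarith [Real.sqrt_nonneg 103]
  have hσpos : 0 < σ₁ := by linarith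
  have hd : 0 < 3 * σ₁ ^ 2 + 14 * σ₁ - 18 := by
    have h1 : Real.sqrt 103 < 3 * σ₁ + 7 := by linarith
    nlinarith [Real.sqrt_nonneg 103]
  have hpoly : α * (3 * (3 * σ₁ ^ 2 + 14 * σ₁ - 18)) = 18 * σ₁ - 5 * σ₁ ^ 2 := by
    rw [hrel]; field_simp; exact mul_div_cancel_right₀ _ (by nlinarith)
  have hE : 0 < 3 * σ₁ + α * (18 - 7 * σ₁) := by nlinarith
  have hsq : Real.sqrt (103 * α ^ 2 - 12 * α + 9)
      = (3 * σ₁ + α * (18 - 7 * σ₁)) / σ₁ := by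
    have : 103 * α ^ 2 - 12 * α + 9 = ((3 * σ₁ + α * (18 - 7 * σ₁)) / σ₁) ^ 2 := by
      field_simp
      linear_combination (6 * α) * hpoly
    rw [this, Real.sqrt_sq (by positivity)]
  rw [hsq, hβ]
  have h9 : (0:ℝ) < 9 - 8 * σ₁ := by linarith
  field_simp
  ring
end

section
/- Let α > 9/5 be real, let μ satisfy α = (12μ + 5μ²)/(6μ² + μ − 12) with 4/3 < μ < 3, and set β = 2μ/(3 − μ). Then 3/(2α) + 2/β = g(α), where g(α) = (√(289α² − 264α + 144) − 7α)/(8α). -/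
theorem stmt_12 (α μ β : ℝ) (hα : 9 / 5 < α)
    (hrel : α = (12 * μ + 5 * μ ^ 2) / (6 * μ ^ 2 + μ - 12))
    (hμlo : 4 / 3 < μ) (hμhi : μ < 3)
    (hβ : β = 2 * μ / (3 - μ)) :
    3 / (2 * α) + 2 / β = (Real.sqrt (289 * α ^ 2 - 264 * α + 144) - 7 * α) / (8 * α) := by
  have hμ0 : (0:ℝ) < μ := by linarith
  have h3μ : (0:ℝ) < 3 - μ := by linarith
  have hd : (0:ℝ) < 6 * μ ^ 2 + μ - 12 := by nlinarith
  have hα0 : (0:ℝ) < α := by linarith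
  set E : ℝ := 12 + 7 * α + 8 * α * (3 - μ) / μ with hE
  have hE0 : 0 < E := by positivity
  have hXE : 289 * α ^ 2 - 264 * α + 144 = E ^ 2 := by
    rw [hE, hrel]
    have hd' := hd.ne'
    have hμ' := hμ0.ne'
    have hd'' : μ * (μ * 6 + 1) - 12 ≠ 0 := by nlinarith
    field_simp
    ring
  rw [hXE, Real.sqrt_sq hE0.le, hβ, hE]
  field_simp
  ring
end
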